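/- In the twisted Baby Fock model with γ_j = μ_j^{−1} β_j* + μ_j β_{−j}, the vector x_∅ is separating for the unital *-algebra Γ of operators on H_ε generated by γ_1, …, γ_k: if T ∈ Γ and T x_∅ = 0, then T = 0. -/

import Mathlib

noncomputable section BabyFock

variable {I : Type*} [Fintype I] [LinearOrder I]

/-- The left creation operator `β_i*` of the Baby Fock model, acting on the Hilbert space with
orthonormal basis `(x_A)_{A ⊆ I}`:  `β_i*(x_A) = (∏_{j ∈ A, j < i} ε i j) • x_{A ∪ {i}}` if
`i ∉ A`, and `β_i*(x_A) = 0` if `i ∈ A`. -/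
def crea (ε : I → I → ℂ) (i : I) :
    EuclideanSpace ℂ (Finset I) →L[ℂ] EuclideanSpace ℂ (Finset I) :=
  Matrix.toEuclideanCLM (𝕜 := ℂ)
    (Matrix.of fun B A : Finset I =>
      if i ∉ A ∧ B = insert i A then ∏ j ∈ A.filter (· < i), ε i j else 0)

/-- The left annihilation operator `β_i` (the adjoint of `β_i*`):
`β_i(x_A) = (∏_{j ∈ A, j < i} ε i j) • x_{A \ {i}}` if `i ∈ A`, and `0` otherwise. -/
def anni (ε : I → I → ℂ) (i : I) :
    EuclideanSpace ℂ (Finset I) →L[ℂ] EuclideanSpace ℂ (Finset I) :=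
  Matrix.toEuclideanCLM (𝕜 := ℂ)
    (Matrix.of fun B A : Finset I =>
      if i ∈ A ∧ B = A.erase i then ∏ j ∈ A.filter (· < i), ε i j else 0)

/-- The right creation operator `α_i*`:
`α_i*(x_A) = (∏_{j ∈ A, j > i} ε i j) • x_{A ∪ {i}}` if `i ∉ A`, and `0` otherwise. -/
def creaR (ε : I → I → ℂ) (i : I) :
    EuclideanSpace ℂ (Finset I) →L[ℂ] EuclideanSpace ℂ (Finset I) :=
  Matrix.toEuclideanCLM (𝕜 := ℂ)
    (Matrix.of fun B A : Finset I =>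
      if i ∉ A ∧ B = insert i A then ∏ j ∈ A.filter (i < ·), ε i j else 0)

/-- The right annihilation operator `α_i` (the adjoint of `α_i*`):
`α_i(x_A) = (∏_{j ∈ A, j > i} ε i j) • x_{A \ {i}}` if `i ∈ A`, and `0` otherwise. -/
def anniR (ε : I → I → ℂ) (i : I) :
    EuclideanSpace ℂ (Finset I) →L[ℂ] EuclideanSpace ℂ (Finset I) :=
  Matrix.toEuclideanCLM (𝕜 := ℂ)
    (Matrix.of fun B A : Finset I =>
      if i ∈ A ∧ B = A.erase i then ∏ j ∈ A.filter (i < ·), ε i j else 0)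

end BabyFock

noncomputable section

/-- The index set `I = {−k, …, −1} ∪ {1, …, k}` of the twisted Baby Fock model, as a subtype
of `ℤ`, with its natural linear order. -/
abbrev Ik (k : ℕ) : Type := {i : ℤ // i ∈ (Finset.Icc (-(k : ℤ)) (k : ℤ)).erase 0}

/-- The map `i ↦ -i` on the index set. -/
def negI {k : ℕ} (i : Ik k) : Ik k :=
  ⟨-i.1, by
    have h := i.2
    simp only [Finset.mem_erase, Finset.mem_Icc] at h ⊢
    omega⟩

/-- The map `i ↦ |i|` on the index set. -/
def absI {k : ℕ} (i : Ik k) : Ik k :=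
  ⟨|i.1|, by
    have h := i.2
    simp only [Finset.mem_erase, Finset.mem_Icc] at h ⊢
    rcases abs_cases i.1 with h' | h' <;> omega⟩

/-- For `j ∈ {1, …, k}` (encoded as `j : Fin k`), the corresponding positive element of the
index set. -/
def posIdx {k : ℕ} (j : Fin k) : Ik k :=
  ⟨(j : ℤ) + 1, by
    have h := j.isLt
    simp only [Finset.mem_erase, Finset.mem_Icc]
    omega⟩

/-- The generalized semi-circular operator `γ_j = μ_j⁻¹ β_j* + μ_j β_{−j}` of the twisted
Baby Fock model, for `j ∈ {1, …, k}`. -/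
def gam {k : ℕ} (ε : Ik k → Ik k → ℂ) (μ : Fin k → ℝ) (j : Fin k) :
    EuclideanSpace ℂ (Finset (Ik k)) →L[ℂ] EuclideanSpace ℂ (Finset (Ik k)) :=
  ((μ j : ℂ))⁻¹ • crea ε (posIdx j) + (μ j : ℂ) • anni ε (negI (posIdx j))

end

noncomputable section Lemmas

theorem toCLM_single {n : Type*} [Fintype n] [DecidableEq n] (A : Matrix n n ℂ) (C B : n) :
    (Matrix.toEuclideanCLM (𝕜 := ℂ) A (EuclideanSpace.single C 1)) B = A B C := by
  have h2 : (Matrix.toEuclideanCLM (𝕜 := ℂ) A (EuclideanSpace.single C 1)) B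
      = Matrix.toLin' A (WithLp.equiv _ _ (EuclideanSpace.single C 1)) B := rfl
  rw [h2, WithLp.equiv_apply, PiLp.ofLp_single, Matrix.toLin'_apply, Matrix.mulVec_single]
  simp

theorem clm_ext_basis {n : Type*} [Fintype n] [DecidableEq n]
    {T S : EuclideanSpace ℂ n →L[ℂ] EuclideanSpace ℂ n}
    (h : ∀ i, T (EuclideanSpace.single i 1) = S (EuclideanSpace.single i 1)) : T = S := by
  apply ContinuousLinearMap.coe_injective
  apply Module.Basis.ext (EuclideanSpace.basisFun n ℂ).toBasis
  intro i
  simpa [EuclideanSpace.basisFun_apply] using h i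

variable {I : Type*} [Fintype I] [LinearOrder I] (ε : I → I → ℂ) (i : I) (A : Finset I)

theorem crea_single (h : i ∉ A) :
    crea ε i (EuclideanSpace.single A 1)
      = (∏ j ∈ A.filter (· < i), ε i j) • EuclideanSpace.single (insert i A) 1 := by
  ext B
  rw [crea, toCLM_single]
  simp only [Matrix.of_apply, PiLp.smul_apply, EuclideanSpace.single_apply, smul_eq_mul, h,
    not_false_iff, true_and]
  split_ifs <;> simp

theorem crea_single' (h : i ∈ A) :
    crea ε i (EuclideanSpace.single A 1) = 0 := by
  ext B
  rw [crea, toCLM_single]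
  simp [h]

theorem anni_single (h : i ∈ A) :
    anni ε i (EuclideanSpace.single A 1)
      = (∏ j ∈ A.filter (· < i), ε i j) • EuclideanSpace.single (A.erase i) 1 := by
  ext B
  rw [anni, toCLM_single]
  simp only [Matrix.of_apply, PiLp.smul_apply, EuclideanSpace.single_apply, smul_eq_mul, h,
    true_and]
  split_ifs <;> simp

theorem anni_single' (h : i ∉ A) :
    anni ε i (EuclideanSpace.single A 1) = 0 := by
  ext B
  rw [anni, toCLM_single]
  simp [h]

theorem creaR_single (h : i ∉ A) :
    creaR ε i (EuclideanSpace.single A 1)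
      = (∏ j ∈ A.filter (i < ·), ε i j) • EuclideanSpace.single (insert i A) 1 := by
  ext B
  rw [creaR, toCLM_single]
  simp only [Matrix.of_apply, PiLp.smul_apply, EuclideanSpace.single_apply, smul_eq_mul, h,
    not_false_iff, true_and]
  split_ifs <;> simp

theorem creaR_single' (h : i ∈ A) :
    creaR ε i (EuclideanSpace.single A 1) = 0 := by
  ext B
  rw [creaR, toCLM_single]
  simp [h]

theorem anniR_single (h : i ∈ A) :
    anniR ε i (EuclideanSpace.single A 1)
      = (∏ j ∈ A.filter (i < ·), ε i j) • EuclideanSpace.single (A.erase i) 1 := by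
  ext B
  rw [anniR, toCLM_single]
  simp only [Matrix.of_apply, PiLp.smul_apply, EuclideanSpace.single_apply, smul_eq_mul, h,
    true_and]
  split_ifs <;> simp

theorem anniR_single' (h : i ∉ A) :
    anniR ε i (EuclideanSpace.single A 1) = 0 := by
  ext B
  rw [anniR, toCLM_single]
  simp [h]

theorem star_crea (hreal : ∀ a b, (starRingEnd ℂ) (ε a b) = ε a b) :
    star (crea ε i) = anni ε i := by
  rw [crea, anni, ← map_star]
  congr 1
  rw [Matrix.star_eq_conjTranspose]
  ext B A
  rw [Matrix.conjTranspose_apply, Matrix.of_apply, Matrix.of_apply]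
  by_cases h : i ∈ A ∧ B = A.erase i
  · obtain ⟨h1, h2⟩ := h
    have hc : i ∉ B ∧ A = insert i B := by
      subst h2
      exact ⟨Finset.notMem_erase i A, (Finset.insert_erase h1).symm⟩
    rw [if_pos hc, if_pos ⟨h1, h2⟩]
    rw [hc.2]
    rw [star_prod]
    refine Finset.prod_congr ?_ fun x _ => by simpa using hreal i x
    rw [Finset.filter_insert]
    simp
  · rw [if_neg h]
    have hc : ¬ (i ∉ B ∧ A = insert i B) := by
      rintro ⟨h1, h2⟩
      apply h
      subst h2
      exact ⟨Finset.mem_insert_self i B, by rw [Finset.erase_insert h1]⟩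
    rw [if_neg hc, star_zero]

theorem star_creaR (hreal : ∀ a b, (starRingEnd ℂ) (ε a b) = ε a b) :
    star (creaR ε i) = anniR ε i := by
  rw [creaR, anniR, ← map_star]
  congr 1
  rw [Matrix.star_eq_conjTranspose]
  ext B A
  rw [Matrix.conjTranspose_apply, Matrix.of_apply, Matrix.of_apply]
  by_cases h : i ∈ A ∧ B = A.erase i
  · obtain ⟨h1, h2⟩ := h
    have hc : i ∉ B ∧ A = insert i B := by
      subst h2
      exact ⟨Finset.notMem_erase i A, (Finset.insert_erase h1).symm⟩
    rw [if_pos hc, if_pos ⟨h1, h2⟩]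
    rw [hc.2]
    rw [star_prod]
    refine Finset.prod_congr ?_ fun x _ => by simpa using hreal i x
    rw [Finset.filter_insert]
    simp
  · rw [if_neg h]
    have hc : ¬ (i ∉ B ∧ A = insert i B) := by
      rintro ⟨h1, h2⟩
      apply h
      subst h2
      exact ⟨Finset.mem_insert_self i B, by rw [Finset.erase_insert h1]⟩
    rw [if_neg hc, star_zero]


variable {j : I}

theorem comm_crea_creaR (hsym : ∀ a b, ε a b = ε b a) (j : I) :
    crea ε i * creaR ε j = creaR ε j * crea ε i := by
  apply clm_ext_basis
  intro A
  simp only [ContinuousLinearMap.mul_apply]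
  by_cases hj : j ∈ A
  · rw [creaR_single' _ _ _ hj, map_zero]
    by_cases hi : i ∈ A
    · rw [crea_single' _ _ _ hi, map_zero]
    · rw [crea_single _ _ _ hi, map_smul,
        creaR_single' _ _ _ (Finset.mem_insert_of_mem hj), smul_zero]
  · by_cases hi : i ∈ A
    · rw [crea_single' _ _ _ hi, map_zero, creaR_single _ _ _ hj, map_smul,
        crea_single' _ _ _ (Finset.mem_insert_of_mem hi), smul_zero]
    · by_cases hij : i = j
      · subst hij
        rw [creaR_single _ _ _ hj, map_smul,
          crea_single' _ _ _ (Finset.mem_insert_self _ _), crea_single _ _ _ hi, map_smul,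
          creaR_single' _ _ _ (Finset.mem_insert_self _ _)]
        simp
      · rw [creaR_single _ _ _ hj, map_smul,
          crea_single _ _ _ (by simp [Finset.mem_insert, hi, hij]),
          crea_single _ _ _ hi, map_smul,
          creaR_single _ _ _ (by simp only [Finset.mem_insert]; push_neg; exact ⟨fun h => hij h.symm, hj⟩),
          smul_smul, smul_smul, Finset.insert_comm i j A]
        congr 1
        rw [Finset.filter_insert, Finset.filter_insert]
        split_ifs with h
        · rw [Finset.prod_insert (by simp [hj]), Finset.prod_insert (by simp [hi]),
            hsym i j]
          ring
        · ring

theorem comm_anni_anniR (hsym : ∀ a b, ε a b = ε b a) (j : I) :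
    anni ε i * anniR ε j = anniR ε j * anni ε i := by
  apply clm_ext_basis
  intro A
  simp only [ContinuousLinearMap.mul_apply]
  by_cases hj : j ∈ A
  · by_cases hi : i ∈ A
    · by_cases hij : i = j
      · subst hij
        rw [anniR_single _ _ _ hj, map_smul, anni_single' _ _ _ (Finset.notMem_erase _ _),
          anni_single _ _ _ hi, map_smul, anniR_single' _ _ _ (Finset.notMem_erase _ _)]
        simp
      · rw [anniR_single _ _ _ hj, map_smul,
          anni_single _ _ _ (Finset.mem_erase.2 ⟨hij, hi⟩),
          anni_single _ _ _ hi, map_smul,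
          anniR_single _ _ _ (Finset.mem_erase.2 ⟨fun h => hij h.symm, hj⟩),
          smul_smul, smul_smul, Finset.erase_right_comm (s := A) (a := j) (b := i)]
        congr 1
        rw [Finset.filter_erase, Finset.filter_erase]
        by_cases h : j < i
        · rw [← Finset.mul_prod_erase (Finset.filter (fun x => x < i) A) (ε i)
              (Finset.mem_filter.2 ⟨hj, h⟩),
            ← Finset.mul_prod_erase (Finset.filter (fun x => j < x) A) (ε j)
              (Finset.mem_filter.2 ⟨hi, h⟩), hsym i j]
          ring
        · rw [Finset.erase_eq_of_notMem (by simp [h]),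
            Finset.erase_eq_of_notMem (by simp [h]), mul_comm]
    · rw [anni_single' _ _ _ hi, map_zero, anniR_single _ _ _ hj, map_smul,
        anni_single' _ _ _ (fun hmem => hi (Finset.mem_of_mem_erase hmem)), smul_zero]
  · rw [anniR_single' _ _ _ hj, map_zero]
    by_cases hi : i ∈ A
    · rw [anni_single _ _ _ hi, map_smul,
        anniR_single' _ _ _ (fun hmem => hj (Finset.mem_of_mem_erase hmem)), smul_zero]
    · rw [anni_single' _ _ _ hi, map_zero]

private theorem key_scalar (a b P Q : ℂ) (h : a * b = 1) : P * Q = a * Q * (b * P) := by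
  rw [mul_mul_mul_comm, h, one_mul, mul_comm]

theorem comm_crea_anniR (hmul : ∀ a b, ε a b * ε b a = 1) {j : I} (hne : i ≠ j) :
    crea ε i * anniR ε j = anniR ε j * crea ε i := by
  apply clm_ext_basis
  intro A
  simp only [ContinuousLinearMap.mul_apply]
  by_cases hj : j ∈ A
  · by_cases hi : i ∈ A
    · rw [anniR_single _ _ _ hj, map_smul,
        crea_single' _ _ _ (Finset.mem_erase.2 ⟨hne, hi⟩),
        crea_single' _ _ _ hi, map_zero, smul_zero]
    · rw [anniR_single _ _ _ hj, map_smul,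
        crea_single _ _ _ (fun hm => hi (Finset.mem_of_mem_erase hm)),
        crea_single _ _ _ hi, map_smul,
        anniR_single _ _ _ (Finset.mem_insert_of_mem hj),
        smul_smul, smul_smul, Finset.erase_insert_of_ne hne]
      congr 1
      rw [Finset.filter_erase, Finset.filter_insert]
      by_cases h : j < i
      · rw [if_pos h,
          ← Finset.mul_prod_erase (Finset.filter (fun x => x < i) A) (ε i)
            (Finset.mem_filter.2 ⟨hj, h⟩),
          Finset.prod_insert (by simp [hi])]
        exact key_scalar _ _ _ _ (hmul i j)
      · rw [if_neg h, Finset.erase_eq_of_notMem (by simp [h]), mul_comm]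
  · rw [anniR_single' _ _ _ hj, map_zero]
    by_cases hi : i ∈ A
    · rw [crea_single' _ _ _ hi, map_zero]
    · rw [crea_single _ _ _ hi, map_smul,
        anniR_single' _ _ _ (by simp only [Finset.mem_insert]; push_neg; exact ⟨fun h => hne h.symm, hj⟩),
        smul_zero]

theorem comm_anni_creaR (hmul : ∀ a b, ε a b * ε b a = 1) {j : I} (hne : i ≠ j) :
    anni ε i * creaR ε j = creaR ε j * anni ε i := by
  apply clm_ext_basis
  intro A
  simp only [ContinuousLinearMap.mul_apply]
  by_cases hj : j ∈ A
  · rw [creaR_single' _ _ _ hj, map_zero]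
    by_cases hi : i ∈ A
    · rw [anni_single _ _ _ hi, map_smul,
        creaR_single' _ _ _ (Finset.mem_erase.2 ⟨fun h : j = i => hne h.symm, hj⟩), smul_zero]
    · rw [anni_single' _ _ _ hi, map_zero]
  · by_cases hi : i ∈ A
    · rw [creaR_single _ _ _ hj, map_smul,
        anni_single _ _ _ (Finset.mem_insert_of_mem hi),
        anni_single _ _ _ hi, map_smul,
        creaR_single _ _ _ (fun hm => hj (Finset.mem_of_mem_erase hm)),
        smul_smul, smul_smul, Finset.erase_insert_of_ne (fun h : j = i => hne h.symm)]
      congr 1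
      rw [Finset.filter_insert, Finset.filter_erase]
      by_cases h : j < i
      · rw [if_pos h, Finset.prod_insert (by simp [hj]),
          ← Finset.mul_prod_erase (Finset.filter (fun x => j < x) A) (ε j)
            (Finset.mem_filter.2 ⟨hi, h⟩)]
        exact (key_scalar _ _ _ _ (hmul j i)).symm
      · rw [if_neg h, Finset.erase_eq_of_notMem (by simp [h]), mul_comm]
    · rw [anni_single' _ _ _ hi, map_zero, creaR_single _ _ _ hj, map_smul,
        anni_single' _ _ _ (by simp [Finset.mem_insert, hi, hne]), smul_zero]

def diagE (ε : I → I → ℂ) (i : I) :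
    EuclideanSpace ℂ (Finset I) →L[ℂ] EuclideanSpace ℂ (Finset I) :=
  Matrix.toEuclideanCLM (𝕜 := ℂ)
    (Matrix.diagonal fun A : Finset I => ∏ l ∈ A, ε i l)

theorem diagE_single :
    diagE ε i (EuclideanSpace.single A 1)
      = (∏ l ∈ A, ε i l) • EuclideanSpace.single A 1 := by
  ext B
  rw [diagE, toCLM_single]
  simp only [PiLp.smul_apply, EuclideanSpace.single_apply, smul_eq_mul]
  rcases eq_or_ne B A with h | h
  · subst h; simp [Matrix.diagonal_apply_eq]
  · rw [Matrix.diagonal_apply_ne _ h, if_neg h, mul_zero]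

theorem prod_partition (h : i ∉ A) :
    (∏ j ∈ A.filter (· < i), ε i j) * (∏ j ∈ A.filter (i < ·), ε i j) = ∏ l ∈ A, ε i l := by
  rw [← Finset.prod_filter_mul_prod_filter_not A (· < i)]
  congr 1
  refine Finset.prod_congr (Finset.filter_congr fun x hx => ?_) fun _ _ => rfl
  try simp only [decide_eq_true_eq]
  constructor
  · intro hlt
    exact not_lt.2 hlt.le
  · intro hnot
    exact lt_of_le_of_ne (not_lt.1 hnot) (fun he => h (he ▸ hx))

theorem comm_anniR_crea_same (hdiag : ∀ a, ε a a = -1) :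
    anniR ε i * crea ε i = crea ε i * anniR ε i + diagE ε i := by
  apply clm_ext_basis
  intro A
  simp only [ContinuousLinearMap.mul_apply, ContinuousLinearMap.add_apply]
  by_cases hi : i ∈ A
  · rw [crea_single' _ _ _ hi, map_zero, anniR_single _ _ _ hi, map_smul,
      crea_single _ _ _ (Finset.notMem_erase _ _), diagE_single, smul_smul,
      Finset.insert_erase hi, ← add_smul]
    rw [Finset.filter_erase, Finset.erase_eq_of_notMem (by simp)]
    rw [← Finset.mul_prod_erase A _ hi, hdiag i,
      ← prod_partition ε i (A.erase i) (Finset.notMem_erase _ _),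
      Finset.filter_erase, Finset.filter_erase,
      Finset.erase_eq_of_notMem (s := Finset.filter (fun x => x < i) A) (by simp),
      Finset.erase_eq_of_notMem (s := Finset.filter (fun x => i < x) A) (by simp)]
    rw [show (∏ j ∈ Finset.filter (fun x => i < x) A, ε i j) *
        ∏ j ∈ Finset.filter (fun x => x < i) A, ε i j +
        -1 * ((∏ j ∈ Finset.filter (fun x => x < i) A, ε i j) *
        ∏ j ∈ Finset.filter (fun x => i < x) A, ε i j) = 0 from by ring, zero_smul]
  · rw [anniR_single' _ _ _ hi, map_zero, zero_add, crea_single _ _ _ hi, map_smul,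
      anniR_single _ _ _ (Finset.mem_insert_self _ _), diagE_single, smul_smul,
      Finset.erase_insert hi, Finset.filter_insert, if_neg (lt_irrefl i),
      prod_partition ε i A hi]

theorem comm_anni_creaR_same (hdiag : ∀ a, ε a a = -1) :
    anni ε i * creaR ε i = creaR ε i * anni ε i + diagE ε i := by
  apply clm_ext_basis
  intro A
  simp only [ContinuousLinearMap.mul_apply, ContinuousLinearMap.add_apply]
  by_cases hi : i ∈ A
  · rw [creaR_single' _ _ _ hi, map_zero, anni_single _ _ _ hi, map_smul,
      creaR_single _ _ _ (Finset.notMem_erase _ _), diagE_single, smul_smul,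
      Finset.insert_erase hi, ← add_smul]
    rw [Finset.filter_erase, Finset.erase_eq_of_notMem (by simp)]
    rw [← Finset.mul_prod_erase A _ hi, hdiag i,
      ← prod_partition ε i (A.erase i) (Finset.notMem_erase _ _),
      Finset.filter_erase, Finset.filter_erase,
      Finset.erase_eq_of_notMem (s := Finset.filter (fun x => x < i) A) (by simp),
      Finset.erase_eq_of_notMem (s := Finset.filter (fun x => i < x) A) (by simp)]
    rw [show (∏ j ∈ Finset.filter (fun x => x < i) A, ε i j) *
        ∏ j ∈ Finset.filter (fun x => i < x) A, ε i j +
        -1 * ((∏ j ∈ Finset.filter (fun x => x < i) A, ε i j) *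
        ∏ j ∈ Finset.filter (fun x => i < x) A, ε i j) = 0 from by ring, zero_smul]
  · rw [anni_single' _ _ _ hi, map_zero, zero_add, creaR_single _ _ _ hi, map_smul,
      anni_single _ _ _ (Finset.mem_insert_self _ _), diagE_single, smul_smul,
      Finset.erase_insert hi, Finset.filter_insert, if_neg (lt_irrefl i),
      mul_comm (∏ j ∈ Finset.filter (fun x => i < x) A, ε i j), prod_partition ε i A hi]

theorem star_anni (hreal : ∀ a b, (starRingEnd ℂ) (ε a b) = ε a b) :
    star (anni ε i) = crea ε i := by
  rw [← star_crea ε i hreal, star_star]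

theorem star_anniR (hreal : ∀ a b, (starRingEnd ℂ) (ε a b) = ε a b) :
    star (anniR ε i) = creaR ε i := by
  rw [← star_creaR ε i hreal, star_star]

end Lemmas

noncomputable section

def gamR {k : ℕ} (ε : Ik k → Ik k → ℂ) (μ : Fin k → ℝ) (j : Fin k) :
    EuclideanSpace ℂ (Finset (Ik k)) →L[ℂ] EuclideanSpace ℂ (Finset (Ik k)) :=
  ((μ j : ℂ))⁻¹ • creaR ε (negI (posIdx j)) + (μ j : ℂ) • anniR ε (posIdx j)

def gamR' {k : ℕ} (ε : Ik k → Ik k → ℂ) (μ : Fin k → ℝ) (j : Fin k) :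
    EuclideanSpace ℂ (Finset (Ik k)) →L[ℂ] EuclideanSpace ℂ (Finset (Ik k)) :=
  ((μ j : ℂ))⁻¹ • anniR ε (negI (posIdx j)) + (μ j : ℂ) • creaR ε (posIdx j)

variable {k : ℕ}

theorem posIdx_ne_neg (m m' : Fin k) : posIdx m ≠ negI (posIdx m') := by
  intro h
  have := congrArg Subtype.val h
  simp only [posIdx, negI] at this
  omega

theorem neg_ne_posIdx (m m' : Fin k) : negI (posIdx m) ≠ posIdx m' :=
  fun h => posIdx_ne_neg m' m h.symm

theorem posIdx_inj {m m' : Fin k} (h : m ≠ m') : posIdx m ≠ posIdx m' := by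
  intro he
  have := congrArg Subtype.val he
  simp only [posIdx] at this
  exact h (Fin.ext (by omega))

theorem negI_posIdx_inj {m m' : Fin k} (h : m ≠ m') : negI (posIdx m) ≠ negI (posIdx m') := by
  intro he
  have := congrArg Subtype.val he
  simp only [posIdx, negI] at this
  exact h (Fin.ext (by omega))

theorem star_gamR (ε : Ik k → Ik k → ℂ) (hreal : ∀ a b, (starRingEnd ℂ) (ε a b) = ε a b)
    (μ : Fin k → ℝ) (m : Fin k) : star (gamR ε μ m) = gamR' ε μ m := by
  rw [gamR, gamR']
  erw [star_add]
  rw [star_smul, star_smul, star_creaR _ _ hreal,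
    star_anniR _ _ hreal]
  congr 1
  · congr 1
    simp [Complex.conj_ofReal]
  · congr 1
    simp [Complex.conj_ofReal]

theorem star_gamR' (ε : Ik k → Ik k → ℂ) (hreal : ∀ a b, (starRingEnd ℂ) (ε a b) = ε a b)
    (μ : Fin k → ℝ) (m : Fin k) : star (gamR' ε μ m) = gamR ε μ m := by
  rw [← star_gamR ε hreal μ m, star_star]

theorem expand_mul {H : Type*} [NormedAddCommGroup H] [InnerProductSpace ℂ H]
    (a b c d : ℂ) (T S X Y : H →L[ℂ] H) :
    (a • T + b • S) * (c • X + d • Y)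
      = (a*c) • (T*X) + (a*d) • (T*Y) + (b*c) • (S*X) + (b*d) • (S*Y) := by
  simp only [add_mul, mul_add, smul_mul_assoc, mul_smul_comm, smul_smul]
  module

theorem diagE_twist (ε : Ik k → Ik k → ℂ) (htw : ∀ i j, ε i j = ε (absI i) (absI j))
    (m : Fin k) : diagE ε (posIdx m) = diagE ε (negI (posIdx m)) := by
  have habs : absI (posIdx m) = absI (negI (posIdx m)) := by
    apply Subtype.ext
    simp [absI, negI]
  rw [diagE, diagE]
  have heq : (fun A : Finset (Ik k) => ∏ l ∈ A, ε (posIdx m) l)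
      = fun A : Finset (Ik k) => ∏ l ∈ A, ε (negI (posIdx m)) l := by
    funext A
    exact Finset.prod_congr rfl fun l _ => by
      rw [htw (posIdx m) l, htw (negI (posIdx m)) l, habs]
  rw [heq]

theorem gam_comm_gamR (ε : Ik k → Ik k → ℂ)
    (hsym : ∀ a b, ε a b = ε b a) (hdiag : ∀ a, ε a a = -1)
    (hmul : ∀ a b, ε a b * ε b a = 1) (htw : ∀ i j, ε i j = ε (absI i) (absI j))
    (μ : Fin k → ℝ) (m m' : Fin k) :
    gam ε μ m * gamR ε μ m' = gamR ε μ m' * gam ε μ m := by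
  rw [gam, gamR, expand_mul, expand_mul]
  rcases eq_or_ne m m' with rfl | hne
  · have h1 : crea ε (posIdx m) * anniR ε (posIdx m)
        = anniR ε (posIdx m) * crea ε (posIdx m) - diagE ε (posIdx m) := by
      rw [comm_anniR_crea_same ε (posIdx m) hdiag]; abel
    have h2 : anni ε (negI (posIdx m)) * creaR ε (negI (posIdx m))
        = creaR ε (negI (posIdx m)) * anni ε (negI (posIdx m)) + diagE ε (negI (posIdx m)) :=
      comm_anni_creaR_same ε (negI (posIdx m)) hdiag
    rw [comm_crea_creaR ε _ hsym, comm_anni_anniR ε _ hsym, h1, h2,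
      diagE_twist ε htw m]
    module
  · rw [comm_crea_creaR ε _ hsym, comm_anni_anniR ε _ hsym,
      comm_crea_anniR ε _ hmul (posIdx_inj hne),
      comm_anni_creaR ε _ hmul (negI_posIdx_inj hne)]
    module

theorem gam_comm_gamR' (ε : Ik k → Ik k → ℂ)
    (hsym : ∀ a b, ε a b = ε b a)
    (hmul : ∀ a b, ε a b * ε b a = 1)
    (μ : Fin k → ℝ) (m m' : Fin k) :
    gam ε μ m * gamR' ε μ m' = gamR' ε μ m' * gam ε μ m := by
  rw [gam, gamR', expand_mul, expand_mul,
    comm_crea_creaR ε _ hsym, comm_anni_anniR ε _ hsym,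
    comm_crea_anniR ε _ hmul (posIdx_ne_neg m m'),
    comm_anni_creaR ε _ hmul (neg_ne_posIdx m m')]
  module

end

/-- In the twisted Baby Fock model, the vacuum vector `x_∅` is separating for
the unital *-algebra `Γ` generated by `γ_1, …, γ_k`: if `T ∈ Γ` and `T x_∅ = 0` then `T = 0`. -/
theorem stmt12 (k : ℕ) (hk : 1 ≤ k) (ε : Ik k → Ik k → ℂ)
    (hval : ∀ i j, ε i j = 1 ∨ ε i j = -1)
    (hsym : ∀ i j, ε i j = ε j i)
    (hdiag : ∀ i, ε i i = -1)
    (htw : ∀ i j, ε i j = ε (absI i) (absI j))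
    (μ : Fin k → ℝ) (hμ : ∀ j, 1 ≤ μ j)
    (T : EuclideanSpace ℂ (Finset (Ik k)) →L[ℂ] EuclideanSpace ℂ (Finset (Ik k)))
    (hT : T ∈ StarAlgebra.adjoin ℂ (Set.range (gam ε μ)))
    (h0 : T (EuclideanSpace.single (∅ : Finset (Ik k)) (1 : ℂ)) = 0) :
    T = 0 := by
  have hreal : ∀ a b, (starRingEnd ℂ) (ε a b) = ε a b := fun a b => by
    rcases hval a b with h | h <;> rw [h] <;> simp
  have hmul : ∀ a b, ε a b * ε b a = 1 := fun a b => by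
    rw [hsym b a]; rcases hval a b with h | h <;> rw [h] <;> norm_num
  have hεne : ∀ a b, ε a b ≠ 0 := fun a b => by
    rcases hval a b with h | h <;> rw [h] <;> norm_num
  have hμne : ∀ m, (μ m : ℂ) ≠ 0 := fun m =>
    Complex.ofReal_ne_zero.mpr (by have := hμ m; linarith)
  -- every element of the star algebra commutes with the right gammas
  have hcomm : ∀ S, S ∈ StarAlgebra.adjoin ℂ (Set.range (gam ε μ)) → ∀ m',
      S * gamR ε μ m' = gamR ε μ m' * S ∧ S * gamR' ε μ m' = gamR' ε μ m' * S := by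
    intro S hS
    induction hS using StarAlgebra.adjoin_induction with
    | mem x hx =>
      obtain ⟨m, rfl⟩ := hx
      exact fun m' => ⟨gam_comm_gamR ε hsym hdiag hmul htw μ m m',
        gam_comm_gamR' ε hsym hmul μ m m'⟩
    | algebraMap r => exact fun m' => ⟨Algebra.commutes r _, Algebra.commutes r _⟩
    | add x y hx hy ihx ihy =>
      exact fun m' => ⟨by rw [add_mul, mul_add, (ihx m').1, (ihy m').1],
        by rw [add_mul, mul_add, (ihx m').2, (ihy m').2]⟩
    | mul x y hx hy ihx ihy =>
      exact fun m' => ⟨by rw [mul_assoc, (ihy m').1, ← mul_assoc, (ihx m').1, mul_assoc],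
        by rw [mul_assoc, (ihy m').2, ← mul_assoc, (ihx m').2, mul_assoc]⟩
    | star x hx ihx =>
      intro m'
      constructor
      · have h := congrArg star (ihx m').2
        rw [star_mul, star_mul, star_gamR' ε hreal μ m'] at h
        exact h.symm
      · have h := congrArg star (ihx m').1
        rw [star_mul, star_mul, star_gamR ε hreal μ m'] at h
        exact h.symm
  -- T annihilates every basis vector, by strong induction on the cardinality
  have key : ∀ n (A : Finset (Ik k)), A.card = n → T (EuclideanSpace.single A 1) = 0 := by
    intro n
    induction n using Nat.strong_induction_on with
    | _ n ih =>
      intro A hcard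
      rcases Finset.eq_empty_or_nonempty A with rfl | ⟨i, hi⟩
      · exact h0
      · set A' := A.erase i with hA'
        have hcard' : A'.card = n - 1 := by rw [hA', Finset.card_erase_of_mem hi, hcard]
        have hn1 : 1 ≤ n := by rw [← hcard]; exact Finset.card_pos.2 ⟨i, hi⟩
        have hTA' : T (EuclideanSpace.single A' 1) = 0 := ih (n-1) (by omega) A' hcard'
        have hiA' : i ∉ A' := Finset.notMem_erase _ _
        have hmem := i.2
        rw [Finset.mem_erase, Finset.mem_Icc] at hmem
        rcases lt_or_gt_of_ne hmem.1 with hneg | hpos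
        · -- i.1 < 0 : use gamR
          have hlt : (-i.1 - 1).toNat < k := by omega
          set m : Fin k := ⟨(-i.1 - 1).toNat, hlt⟩ with hm
          have hpm : negI (posIdx m) = i := Subtype.ext (by
            simp only [negI, posIdx, hm]
            omega)
          have hc := (hcomm T hT m).1
          have h2 : T (gamR ε μ m (EuclideanSpace.single A' 1)) = 0 := by
            have h3 : (T * gamR ε μ m) (EuclideanSpace.single A' 1)
                = (gamR ε μ m * T) (EuclideanSpace.single A' 1) := by rw [hc]
            simp only [ContinuousLinearMap.mul_apply] at h3
            rw [h3, hTA', map_zero]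
          rw [gamR, ContinuousLinearMap.add_apply, ContinuousLinearMap.smul_apply,
            ContinuousLinearMap.smul_apply, map_add, map_smul, map_smul, hpm] at h2
          rw [show creaR ε i (EuclideanSpace.single A' 1)
              = (∏ j ∈ A'.filter (i < ·), ε i j) • EuclideanSpace.single A 1 from
            (creaR_single _ _ _ hiA').trans (by congr 2; exact Finset.insert_erase hi)] at h2
          rw [map_smul] at h2
          have hanni : T (anniR ε (posIdx m) (EuclideanSpace.single A' 1)) = 0 := by
            by_cases hmem2 : posIdx m ∈ A'
            · rw [show anniR ε (posIdx m) (EuclideanSpace.single A' 1)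
                  = (∏ j ∈ A'.filter ((posIdx m) < ·), ε (posIdx m) j) •
                    EuclideanSpace.single (A'.erase (posIdx m)) 1 from anniR_single _ _ _ hmem2, map_smul,
                ih ((A'.erase (posIdx m)).card)
                  (by rw [Finset.card_erase_of_mem hmem2, hcard']; omega) _ rfl, smul_zero]
            · rw [show anniR ε (posIdx m) (EuclideanSpace.single A' 1) = 0 from
                anniR_single' _ _ _ hmem2, map_zero]
          rw [hanni, smul_zero, add_zero, smul_smul] at h2
          have hcne : (∏ j ∈ A'.filter (i < ·), ε i j) ≠ 0 :=
            Finset.prod_ne_zero_iff.mpr fun j _ => hεne i j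
          rcases smul_eq_zero.mp h2 with h4 | h4
          · exact absurd h4 (by
              simp only [mul_ne_zero_iff]
              exact ⟨inv_ne_zero (hμne m), hcne⟩)
          · exact h4
        · -- i.1 > 0 : use gamR'
          have hlt : (i.1 - 1).toNat < k := by omega
          set m : Fin k := ⟨(i.1 - 1).toNat, hlt⟩ with hm
          have hpm : posIdx m = i := Subtype.ext (by
            simp only [posIdx, hm]
            omega)
          have hc := (hcomm T hT m).2
          have h2 : T (gamR' ε μ m (EuclideanSpace.single A' 1)) = 0 := by
            have h3 : (T * gamR' ε μ m) (EuclideanSpace.single A' 1)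
                = (gamR' ε μ m * T) (EuclideanSpace.single A' 1) := by rw [hc]
            simp only [ContinuousLinearMap.mul_apply] at h3
            rw [h3, hTA', map_zero]
          rw [gamR', ContinuousLinearMap.add_apply, ContinuousLinearMap.smul_apply,
            ContinuousLinearMap.smul_apply, map_add, map_smul, map_smul, hpm] at h2
          rw [show creaR ε i (EuclideanSpace.single A' 1)
              = (∏ j ∈ A'.filter (i < ·), ε i j) • EuclideanSpace.single A 1 from
            (creaR_single _ _ _ hiA').trans (by congr 2; exact Finset.insert_erase hi)] at h2
          rw [map_smul] at h2
          have hanni : T (anniR ε (negI i) (EuclideanSpace.single A' 1)) = 0 := by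
            by_cases hmem2 : negI i ∈ A'
            · rw [show anniR ε (negI i) (EuclideanSpace.single A' 1)
                  = (∏ j ∈ A'.filter ((negI i) < ·), ε (negI i) j) •
                    EuclideanSpace.single (A'.erase (negI i)) 1 from anniR_single _ _ _ hmem2, map_smul,
                ih ((A'.erase (negI i)).card)
                  (by rw [Finset.card_erase_of_mem hmem2, hcard']; omega) _ rfl, smul_zero]
            · rw [show anniR ε (negI i) (EuclideanSpace.single A' 1) = 0 from
                anniR_single' _ _ _ hmem2, map_zero]
          rw [hanni, smul_zero, zero_add, smul_smul] at h2
          have hcne : (∏ j ∈ A'.filter (i < ·), ε i j) ≠ 0 :=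
            Finset.prod_ne_zero_iff.mpr fun j _ => hεne i j
          rcases smul_eq_zero.mp h2 with h4 | h4
          · exact absurd h4 (by
              simp only [mul_ne_zero_iff]
              exact ⟨hμne m, hcne⟩)
          · exact h4
  apply clm_ext_basis
  intro A
  rw [key A.card A rfl]
  simp
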